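/- Let S : [0,2) → [0,2) be defined by S(0) = 0 and S(y) = 2 − y for y ∈ (0,2). For every y ∈ [0,2) ∩ ℤ[φ] there exists N₀ such that for every N ≥ N₀ and every choice of maps R_1, …, R_N with each R_k equal to R or to R∘S, the point R_N(⋯(R_1(y))⋯) belongs to the set {0, 1, 2−φ, φ, φ−1, 3φ−3, 3−φ, 5−3φ}. -/
import Mathlib


open Set

noncomputable section

/-- The golden ratio `(1+√5)/2`. -/
def gold : ℝ := (1 + Real.sqrt 5) / 2

/-- The ring `ℤ[φ]`. -/
def Zgold : Set ℝ := {x | ∃ m n : ℤ, x = m + n * gold}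

/-- The renormalization map `R` on `[0,2)`. -/
def Rmap (y : ℝ) : ℝ :=
  if y < 2 - gold then gold ^ 3 * y
  else if y < 4 - 2 * gold then y + 2 * gold - 2
  else if y < 2 * gold - 2 then gold ^ 3 * y - 2 * gold
  else if y < gold then y - 2 * gold + 2
  else gold ^ 3 * y - 4 * gold

/-- The involution `S(y) = 2 - y` on `[0,2)`, with `S 0 = 0`. -/
def Smap (y : ℝ) : ℝ := if y = 0 then 0 else 2 - y

/-- Iterated composition: `chain g y n = g (n-1) ( ⋯ (g 0 y) ⋯ )`. -/
def chain (g : ℕ → ℝ → ℝ) (y : ℝ) : ℕ → ℝ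
  | 0 => y
  | n + 1 => g n (chain g y n)

lemma sqrt5_sq : Real.sqrt 5 ^ 2 = 5 := Real.sq_sqrt (by norm_num)

lemma sqrt5_gt : 2.236 < Real.sqrt 5 := by
  nlinarith [sqrt5_sq, Real.sqrt_nonneg 5]

lemma sqrt5_lt : Real.sqrt 5 < 2.2361 := by
  nlinarith [sqrt5_sq, Real.sqrt_nonneg 5]

lemma gsq : gold ^ 2 = gold + 1 := by
  have h := sqrt5_sq
  unfold gold; ring_nf; nlinarith [h]

lemma g_gt : 1.618 < gold := by unfold gold; linarith [sqrt5_gt]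

lemma g_lt : gold < 1.6181 := by unfold gold; linarith [sqrt5_lt]

lemma Rbr1 {y : ℝ} (h : y < 2 - gold) : Rmap y = gold ^ 3 * y := by
  unfold Rmap; rw [if_pos h]

lemma Rbr2 {y : ℝ} (h1 : 2 - gold ≤ y) (h2 : y < 4 - 2 * gold) :
    Rmap y = y + 2 * gold - 2 := by
  unfold Rmap; rw [if_neg (by linarith), if_pos h2]

lemma Rbr3 {y : ℝ} (h1 : 4 - 2 * gold ≤ y) (h2 : y < 2 * gold - 2) :
    Rmap y = gold ^ 3 * y - 2 * gold := by
  have := g_gt; have := g_lt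
  unfold Rmap; rw [if_neg (by linarith), if_neg (by linarith), if_pos h2]

lemma Rbr4 {y : ℝ} (h1 : 2 * gold - 2 ≤ y) (h2 : y < gold) :
    Rmap y = y - 2 * gold + 2 := by
  have := g_gt; have := g_lt
  unfold Rmap; rw [if_neg (by linarith), if_neg (by linarith), if_neg (by linarith), if_pos h2]

lemma Rbr5 {y : ℝ} (h : gold ≤ y) : Rmap y = gold ^ 3 * y - 4 * gold := by
  have := g_gt; have := g_lt
  unfold Rmap
  rw [if_neg (by linarith), if_neg (by linarith), if_neg (by linarith), if_neg (by linarith)]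

lemma Sne {y : ℝ} (h : y ≠ 0) : Smap y = 2 - y := by unfold Smap; rw [if_neg h]

def Tset : Set ℝ :=
  ({0, 1, 2 - gold, gold, gold - 1, 3 * gold - 3, 3 - gold, 5 - 3 * gold} : Set ℝ)

lemma ST' : ∀ x ∈ Tset, Smap x ∈ Tset := by
  have h1 := g_gt; have h2 := g_lt
  intro x hx
  simp only [Tset, mem_insert_iff, mem_singleton_iff] at hx ⊢
  rcases hx with h|h|h|h|h|h|h|h <;> subst h
  · left; simp [Smap]
  · rw [Sne (by norm_num)]; right; left; norm_num
  · rw [Sne (by intro h; linarith)]; right; right; right; left; ring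
  · rw [Sne (by intro h; linarith)]; right; right; left; ring
  · rw [Sne (by intro h; linarith)]; right; right; right; right; right; right; left; ring
  · rw [Sne (by intro h; linarith)]; right; right; right; right; right; right; right; ring
  · rw [Sne (by intro h; linarith)]; right; right; right; right; left; ring
  · rw [Sne (by intro h; linarith)]; right; right; right; right; right; left; ring

lemma RT : ∀ x ∈ Tset, Rmap x ∈ Tset := by
  have h1 := g_gt; have h2 := g_lt; have h3 := gsq
  intro x hx
  simp only [Tset, mem_insert_iff, mem_singleton_iff] at hx ⊢
  rcases hx with h|h|h|h|h|h|h|h <;> subst h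
  · rw [Rbr1 (by linarith)]; left; ring
  · rw [Rbr3 (by linarith) (by linarith)]; right; left
    linear_combination (gold + 1) * gsq
  · rw [Rbr2 (by linarith) (by linarith)]; right; right; right; left; ring
  · rw [Rbr5 (by linarith)]; right; right; left
    linear_combination (gold^2 + gold + 2) * gsq
  · rw [Rbr2 (by linarith) (by linarith)]; right; right; right; right; right; left; ring
  · rw [Rbr5 (by linarith)]; right; right; right; right; right; right; left
    linear_combination (3*gold^2 + 3) * gsq
  · rw [Rbr4 (by linarith) (by linarith)]; right; right; right; right; right; right; right; ring
  · rw [Rbr1 (by linarith)]; right; right; right; right; left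
    linear_combination (-3*gold^2 + 2*gold - 1) * gsq

def GoodP (x : ℝ) : Prop :=
  ∃ N₀ : ℕ, ∀ N ≥ N₀, ∀ g : ℕ → ℝ → ℝ,
    (∀ k < N, g k = Rmap ∨ g k = Rmap ∘ Smap) → chain g x N ∈ Tset

lemma chainT {x : ℝ} (hx : x ∈ Tset) : ∀ N : ℕ, ∀ g : ℕ → ℝ → ℝ,
    (∀ k < N, g k = Rmap ∨ g k = Rmap ∘ Smap) → chain g x N ∈ Tset := by
  intro N
  induction N with
  | zero => exact fun g _ => hx
  | succ N ih =>
    intro g hg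
    have hc : chain g x N ∈ Tset := ih g (fun k hk => hg k (by omega))
    show g N (chain g x N) ∈ Tset
    rcases hg N (by omega) with h | h <;> rw [h]
    · exact RT _ hc
    · exact RT _ (ST' _ hc)

lemma good_T {x : ℝ} (hx : x ∈ Tset) : GoodP x := ⟨0, fun N _ => chainT hx N⟩

lemma chain_shift (g : ℕ → ℝ → ℝ) (x : ℝ) :
    ∀ m, chain g x (m + 1) = chain (fun k => g (k + 1)) (g 0 x) m := by
  intro m
  induction m with
  | zero => rfl
  | succ m ih => show g (m+1) (chain g x (m+1)) = _; rw [ih]; rfl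

lemma good_step {x : ℝ} (h1 : GoodP (Rmap x)) (h2 : GoodP (Rmap (Smap x))) :
    GoodP x := by
  obtain ⟨n1, H1⟩ := h1
  obtain ⟨n2, H2⟩ := h2
  refine ⟨n1 + n2 + 1, fun N hN g hg => ?_⟩
  obtain ⟨m, rfl⟩ : ∃ m, N = m + 1 := ⟨N - 1, by omega⟩
  rw [chain_shift]
  have hval : ∀ k < m, (fun k => g (k+1)) k = Rmap ∨ (fun k => g (k+1)) k = Rmap ∘ Smap :=
    fun k hk => hg (k+1) (by omega)
  rcases hg 0 (by omega) with h | h <;> rw [h]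
  · exact H1 m (by omega) _ hval
  · exact H2 m (by omega) _ hval

def yv (m n : ℤ) : ℝ := m + n * gold
def zv (m n : ℤ) : ℝ := m + n * (1 - gold)

lemma yv_S (m n : ℤ) : yv (2 - m) (-n) = 2 - yv m n := by unfold yv; push_cast; ring
lemma zv_S (m n : ℤ) : zv (2 - m) (-n) = 2 - zv m n := by unfold zv; push_cast; ring

lemma abs_sub_le' (z c : ℝ) (hc : 0 ≤ c) : |z - c| ≤ |z| + c := by
  have h := abs_add_le z (-c)
  rw [abs_neg, abs_of_nonneg hc] at h
  calc |z - c| = |z + -c| := by ring_nf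
  _ ≤ |z| + c := h

lemma abs_add_le' (z c : ℝ) (hc : 0 ≤ c) : |z + c| ≤ |z| + c := by
  have h := abs_add_le z c
  rwa [abs_of_nonneg hc] at h

lemma Rcoord (m n : ℤ) (h0 : 0 ≤ yv m n) (h2 : yv m n < 2) :
    ∃ m' n' : ℤ, Rmap (yv m n) = yv m' n' ∧ 0 ≤ yv m' n' ∧ yv m' n' < 2 ∧
      ( |zv m' n'| ≤ (2 * gold - 3) * |zv m n| + (4 * gold - 4)
        ∨ (|zv m' n'| ≤ |zv m n| + 2 * gold ∧ 2 - gold ≤ yv m n ∧ yv m n < gold ∧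
            (gold ≤ yv m' n' ∨ yv m' n' < 2 - gold)) ) := by
  have hgl := g_gt; have hgu := g_lt
  have hgpos : (0:ℝ) < gold := by linarith
  have hg3 : (0:ℝ) < gold ^ 3 := by positivity
  have e4 : gold ^ 3 = 2 * gold + 1 := by linear_combination (gold + 1) * gsq
  rcases lt_or_ge (yv m n) (2 - gold) with hA | hA
  · -- branch 1
    have hy' : yv (m + 2*n) (2*m + 3*n) = gold ^ 3 * yv m n := by
      unfold yv; push_cast
      linear_combination (-(n:ℝ) * gold^2 - (m + n) * gold - (m + 2*n)) * gsq
    have hz' : zv (m + 2*n) (2*m + 3*n) = (3 - 2 * gold) * zv m n := by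
      unfold zv; push_cast; linear_combination (-2*(n:ℝ)) * gsq
    refine ⟨m + 2*n, 2*m + 3*n, (Rbr1 hA).trans hy'.symm, ?_, ?_, Or.inl ?_⟩
    · rw [hy']; exact mul_nonneg (by positivity) h0
    · rw [hy']
      have e1 : gold ^ 3 * (2 - gold) = gold := by
        linear_combination (gold - gold^2) * gsq
      nlinarith [mul_lt_mul_of_pos_left hA hg3]
    · rw [hz', abs_mul, abs_of_neg (by linarith : (3:ℝ) - 2*gold < 0)]
      have := abs_nonneg (zv m n)
      nlinarith
  rcases lt_or_ge (yv m n) (4 - 2 * gold) with hB | hB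
  · -- branch 2 (translation up)
    have hy' : yv (m - 2) (n + 2) = yv m n + 2 * gold - 2 := by
      unfold yv; push_cast; ring
    have hz' : zv (m - 2) (n + 2) = zv m n - 2 * gold := by
      unfold zv; push_cast; ring
    refine ⟨m - 2, n + 2, (Rbr2 hA hB).trans hy'.symm, ?_, ?_, Or.inr ⟨?_, hA, by linarith, Or.inl ?_⟩⟩
    · rw [hy']; linarith
    · rw [hy']; linarith
    · rw [hz']; exact abs_sub_le' _ _ (by linarith)
    · rw [hy']; linarith
  rcases lt_or_ge (yv m n) (2 * gold - 2) with hC | hC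
  · -- branch 3
    have hy' : yv (m + 2*n) (2*m + 3*n - 2) = gold ^ 3 * yv m n - 2 * gold := by
      unfold yv; push_cast
      linear_combination (-(n:ℝ) * gold^2 - (m + n) * gold - (m + 2*n)) * gsq
    have hz' : zv (m + 2*n) (2*m + 3*n - 2) = (3 - 2 * gold) * zv m n + (2 * gold - 2) := by
      unfold zv; push_cast; linear_combination (-2*(n:ℝ)) * gsq
    refine ⟨m + 2*n, 2*m + 3*n - 2, (Rbr3 hB hC).trans hy'.symm, ?_, ?_, Or.inl ?_⟩
    · rw [hy']
      have e1 : gold ^ 3 * (4 - 2 * gold) = 2 * gold := by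
        linear_combination (2*gold - 2*gold^2) * gsq
      nlinarith [mul_le_mul_of_nonneg_left hB (le_of_lt hg3)]
    · rw [hy']
      have e2 : gold ^ 3 * (2 * gold - 2) = 2 * gold + 2 := by
        linear_combination (2*gold^2 + 2) * gsq
      nlinarith [mul_lt_mul_of_pos_left hC hg3]
    · rw [hz']
      have h1 := abs_add_le' ((3 - 2*gold) * zv m n) (2*gold - 2) (by linarith)
      rw [abs_mul, abs_of_neg (by linarith : (3:ℝ) - 2*gold < 0)] at h1
      have := abs_nonneg (zv m n)
      nlinarith
  rcases lt_or_ge (yv m n) gold with hD | hD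
  · -- branch 4 (translation down)
    have hy' : yv (m + 2) (n - 2) = yv m n - 2 * gold + 2 := by
      unfold yv; push_cast; ring
    have hz' : zv (m + 2) (n - 2) = zv m n + 2 * gold := by
      unfold zv; push_cast; ring
    refine ⟨m + 2, n - 2, (Rbr4 hC hD).trans hy'.symm, ?_, ?_,
      Or.inr ⟨?_, by linarith, hD, Or.inr ?_⟩⟩
    · rw [hy']; linarith
    · rw [hy']; linarith
    · rw [hz']; exact abs_add_le' _ _ (by linarith)
    · rw [hy']; linarith
  · -- branch 5
    have hy' : yv (m + 2*n) (2*m + 3*n - 4) = gold ^ 3 * yv m n - 4 * gold := by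
      unfold yv; push_cast
      linear_combination (-(n:ℝ) * gold^2 - (m + n) * gold - (m + 2*n)) * gsq
    have hz' : zv (m + 2*n) (2*m + 3*n - 4) = (3 - 2 * gold) * zv m n + (4 * gold - 4) := by
      unfold zv; push_cast; linear_combination (-2*(n:ℝ)) * gsq
    refine ⟨m + 2*n, 2*m + 3*n - 4, (Rbr5 hD).trans hy'.symm, ?_, ?_, Or.inl ?_⟩
    · rw [hy']
      have e3 : gold ^ 3 * gold = 3 * gold + 2 := by
        linear_combination (gold^2 + gold + 2) * gsq
      nlinarith [mul_le_mul_of_nonneg_left hD (le_of_lt hg3)]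
    · rw [hy']
      nlinarith [mul_lt_mul_of_pos_left h2 hg3]
    · rw [hz']
      have h1 := abs_add_le' ((3 - 2*gold) * zv m n) (4*gold - 4) (by linarith)
      rw [abs_mul, abs_of_neg (by linarith : (3:ℝ) - 2*gold < 0)] at h1
      have := abs_nonneg (zv m n)
      nlinarith

lemma zero_mem_T : (0:ℝ) ∈ Tset := by simp [Tset]
lemma gold_mem_T : gold ∈ Tset := by simp [Tset]

set_option maxHeartbeats 1000000 in
lemma key_succ (K : ℕ)
    (ih : ∀ m n : ℤ, 0 ≤ yv m n → yv m n < 2 → |zv m n| ≤ 14 + 2*(K:ℝ) → GoodP (yv m n)) :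
    ∀ m n : ℤ, 0 ≤ yv m n → yv m n < 2 → |zv m n| ≤ 14 + 2*((K:ℝ)+1) → GoodP (yv m n) := by
  intro m n h0 h2 hz
  have hgl := g_gt; have hgu := g_lt
  have hK0 : (0:ℝ) ≤ (K:ℝ) := Nat.cast_nonneg K
  by_cases hle : |zv m n| ≤ 14 + 2*(K:ℝ)
  · exact ih m n h0 h2 hle
  push_neg at hle
  set Z := |zv m n| with hZdef
  have hZ14 : 14 < Z := by linarith
  have hZup : Z ≤ 16 + 2*(K:ℝ) := by linarith
  have ha2 : 2*gold - 3 ≤ 0.2362 := by linarith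
  have ha1 : (0:ℝ) < 2*gold - 3 := by linarith
  -- second-level claim
  have good1 : ∀ m1 n1 : ℤ, 0 ≤ yv m1 n1 → yv m1 n1 < 2 →
      (|zv m1 n1| ≤ (2*gold - 3) * (Z + 2) + (4*gold - 4)
        ∨ (|zv m1 n1| ≤ Z + 2 + 2*gold ∧ (gold ≤ yv m1 n1 ∨ yv m1 n1 < 2 - gold))) →
      GoodP (yv m1 n1) := by
    intro m1 n1 k0 k2 hk
    have hz1 : |zv m1 n1| ≤ Z + 2 + 2*gold := by
      rcases hk with h | ⟨h, _⟩
      · have := mul_le_mul_of_nonneg_right ha2 (by linarith : (0:ℝ) ≤ Z + 2)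
        nlinarith
      · exact h
    by_cases hy10 : yv m1 n1 = 0
    · rw [hy10]; exact good_T zero_mem_T
    by_cases hy1g : yv m1 n1 = gold
    · rw [hy1g]; exact good_T gold_mem_T
    apply good_step
    · -- Good (Rmap y1)
      obtain ⟨m2, n2, he, hb0, hb2, hd⟩ := Rcoord m1 n1 k0 k2
      rw [he]
      apply ih m2 n2 hb0 hb2
      rcases hd with hmult | ⟨htr, hin1, hin2, _⟩
      · -- |z2| ≤ (2g-3)|z1| + 4g-4 ≤ Z - 2 ≤ 14 + 2K
        have h3 := mul_le_mul_of_nonneg_right ha2 (abs_nonneg (zv m1 n1))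
        have h4 : (0.2362:ℝ) * |zv m1 n1| ≤ 0.2362 * (Z + 2 + 2*gold) := by
          nlinarith [abs_nonneg (zv m1 n1)]
        nlinarith [abs_nonneg (zv m1 n1)]
      · -- step-2 translation: possible only when hk is the mult case
        rcases hk with hkA | ⟨hkB, hkr⟩
        · nlinarith [abs_nonneg (zv m1 n1)]
        · rcases hkr with h | h <;> linarith
    · -- Good (Rmap (Smap y1))
      rw [Sne hy10]
      have hy1pos : 0 < yv m1 n1 := lt_of_le_of_ne k0 (Ne.symm hy10)
      have hS : (2:ℝ) - yv m1 n1 = yv (2 - m1) (-n1) := (yv_S m1 n1).symm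
      rw [hS]
      have hzS : |zv (2 - m1) (-n1)| ≤ |zv m1 n1| + 2 := by
        rw [zv_S]
        have e : (2:ℝ) - zv m1 n1 = -(zv m1 n1 - 2) := by ring
        rw [e, abs_neg]
        exact abs_sub_le' _ 2 (by norm_num)
      obtain ⟨m2, n2, he, hb0, hb2, hd⟩ :=
        Rcoord (2 - m1) (-n1) (by rw [← hS]; linarith) (by rw [← hS]; linarith)
      rw [he]
      apply ih m2 n2 hb0 hb2
      rcases hd with hmult | ⟨htr, hin1, hin2, _⟩
      · have h4 : (2*gold - 3) * |zv (2 - m1) (-n1)| ≤ 0.2362 * (Z + 4 + 2*gold) := by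
          have : |zv (2 - m1) (-n1)| ≤ Z + 4 + 2*gold := by linarith
          nlinarith [abs_nonneg (zv (2 - m1) (-n1))]
        nlinarith
      · -- translation after S
        rcases hk with hkA | ⟨hkB, hkr⟩
        · nlinarith
        · rw [yv_S] at hin1 hin2
          rcases hkr with h | h
          · exact absurd (le_antisymm (by linarith) h) hy1g
          · linarith
  -- top level
  by_cases hy0 : yv m n = 0
  · rw [hy0]; exact good_T zero_mem_T
  apply good_step
  · obtain ⟨m1, n1, he, hb0, hb2, hd⟩ := Rcoord m n h0 h2
    rw [he]
    apply good1 m1 n1 hb0 hb2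
    rcases hd with hmult | ⟨htr, _, _, hrange⟩
    · left; nlinarith [abs_nonneg (zv m n)]
    · right; exact ⟨by linarith, hrange⟩
  · rw [Sne hy0]
    have hypos : 0 < yv m n := lt_of_le_of_ne h0 (Ne.symm hy0)
    have hS : (2:ℝ) - yv m n = yv (2 - m) (-n) := (yv_S m n).symm
    rw [hS]
    have hzS : |zv (2 - m) (-n)| ≤ Z + 2 := by
      rw [zv_S]
      have e : (2:ℝ) - zv m n = -(zv m n - 2) := by ring
      rw [e, abs_neg]
      exact abs_sub_le' _ 2 (by norm_num)
    obtain ⟨m1, n1, he, hb0, hb2, hd⟩ :=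
      Rcoord (2 - m) (-n) (by rw [← hS]; linarith) (by rw [← hS]; linarith)
    rw [he]
    apply good1 m1 n1 hb0 hb2
    rcases hd with hmult | ⟨htr, _, _, hrange⟩
    · left
      have h4 := mul_le_mul_of_nonneg_left hzS (le_of_lt ha1)
      linarith
    · right; exact ⟨by linarith, hrange⟩

lemma gp_m3_3 : GoodP (yv (-3) 3) := by
  rw [show yv (-3) 3 = 3*gold - 3 from by unfold yv; push_cast; ring]
  exact good_T (by simp [Tset])

lemma gp_m1_1 : GoodP (yv (-1) 1) := by
  rw [show yv (-1) 1 = gold - 1 from by unfold yv; push_cast; ring]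
  exact good_T (by simp [Tset])

lemma gp_0_0 : GoodP (yv 0 0) := by
  rw [show yv 0 0 = 0 from by unfold yv; push_cast; ring]
  exact good_T (by simp [Tset])

lemma gp_0_1 : GoodP (yv 0 1) := by
  rw [show yv 0 1 = gold from by unfold yv; push_cast; ring]
  exact good_T (by simp [Tset])

lemma gp_1_0 : GoodP (yv 1 0) := by
  rw [show yv 1 0 = 1 from by unfold yv; push_cast; ring]
  exact good_T (by simp [Tset])

lemma gp_2_m1 : GoodP (yv 2 (-1)) := by
  rw [show yv 2 (-1) = 2 - gold from by unfold yv; push_cast; ring]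
  exact good_T (by simp [Tset])

lemma gp_3_m1 : GoodP (yv 3 (-1)) := by
  rw [show yv 3 (-1) = 3 - gold from by unfold yv; push_cast; ring]
  exact good_T (by simp [Tset])

lemma gp_5_m3 : GoodP (yv 5 (-3)) := by
  rw [show yv 5 (-3) = 5 - 3*gold from by unfold yv; push_cast; ring]
  exact good_T (by simp [Tset])

lemma gp_m8_5 : GoodP (yv (-8) 5) := by
  have hgl := g_gt; have hgu := g_lt
  have hv : yv (-8) 5 = (-8:ℝ) + 5*gold := by unfold yv; push_cast; ring
  have e1 : Rmap (yv (-8) 5) = yv 2 (-1) := by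
    rw [hv, Rbr1 (by linarith)]
    unfold yv; push_cast; linear_combination ((5:ℝ)*gold^2 + (-3)*gold + (2)) * gsq
  have e2 : Smap (yv (-8) 5) = yv 10 (-5) := by
    rw [hv, Sne (by intro h; linarith)]; unfold yv; push_cast; ring
  have hv2 : yv 10 (-5) = (10:ℝ) - 5*gold := by unfold yv; push_cast; ring
  have e3 : Rmap (yv 10 (-5)) = yv 0 1 := by
    rw [hv2, Rbr5 (by linarith)]
    unfold yv; push_cast; linear_combination ((-5:ℝ)*gold^2 + (5)*gold + (0)) * gsq
  exact good_step (by rw [e1]; exact gp_2_m1) (by rw [e2, e3]; exact gp_0_1)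

lemma gp_m7_5 : GoodP (yv (-7) 5) := by
  have hgl := g_gt; have hgu := g_lt
  have hv : yv (-7) 5 = (-7:ℝ) + 5*gold := by unfold yv; push_cast; ring
  have e1 : Rmap (yv (-7) 5) = yv 3 (-1) := by
    rw [hv, Rbr3 (by linarith) (by linarith)]
    unfold yv; push_cast; linear_combination ((5:ℝ)*gold^2 + (-2)*gold + (3)) * gsq
  have e2 : Smap (yv (-7) 5) = yv 9 (-5) := by
    rw [hv, Sne (by intro h; linarith)]; unfold yv; push_cast; ring
  have hv2 : yv 9 (-5) = (9:ℝ) - 5*gold := by unfold yv; push_cast; ring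
  have e3 : Rmap (yv 9 (-5)) = yv (-1) 1 := by
    rw [hv2, Rbr3 (by linarith) (by linarith)]
    unfold yv; push_cast; linear_combination ((-5:ℝ)*gold^2 + (4)*gold + (-1)) * gsq
  exact good_step (by rw [e1]; exact gp_3_m1) (by rw [e2, e3]; exact gp_m1_1)

lemma gp_m4_3 : GoodP (yv (-4) 3) := by
  have hgl := g_gt; have hgu := g_lt
  have hv : yv (-4) 3 = (-4:ℝ) + 3*gold := by unfold yv; push_cast; ring
  have e1 : Rmap (yv (-4) 3) = yv 2 (-1) := by
    rw [hv, Rbr3 (by linarith) (by linarith)]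
    unfold yv; push_cast; linear_combination ((3:ℝ)*gold^2 + (-1)*gold + (2)) * gsq
  have e2 : Smap (yv (-4) 3) = yv 6 (-3) := by
    rw [hv, Sne (by intro h; linarith)]; unfold yv; push_cast; ring
  have hv2 : yv 6 (-3) = (6:ℝ) - 3*gold := by unfold yv; push_cast; ring
  have e3 : Rmap (yv 6 (-3)) = yv 0 1 := by
    rw [hv2, Rbr3 (by linarith) (by linarith)]
    unfold yv; push_cast; linear_combination ((-3:ℝ)*gold^2 + (3)*gold + (0)) * gsq
  exact good_step (by rw [e1]; exact gp_2_m1) (by rw [e2, e3]; exact gp_0_1)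

lemma gp_m3_2 : GoodP (yv (-3) 2) := by
  have hgl := g_gt; have hgu := g_lt
  have hv : yv (-3) 2 = (-3:ℝ) + 2*gold := by unfold yv; push_cast; ring
  have e1 : Rmap (yv (-3) 2) = yv 1 0 := by
    rw [hv, Rbr1 (by linarith)]
    unfold yv; push_cast; linear_combination ((2:ℝ)*gold^2 + (-1)*gold + (1)) * gsq
  have e2 : Smap (yv (-3) 2) = yv 5 (-2) := by
    rw [hv, Sne (by intro h; linarith)]; unfold yv; push_cast; ring
  have hv2 : yv 5 (-2) = (5:ℝ) - 2*gold := by unfold yv; push_cast; ring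
  have e3 : Rmap (yv 5 (-2)) = yv 1 0 := by
    rw [hv2, Rbr5 (by linarith)]
    unfold yv; push_cast; linear_combination ((-2:ℝ)*gold^2 + (3)*gold + (1)) * gsq
  exact good_step (by rw [e1]; exact gp_1_0) (by rw [e2, e3]; exact gp_1_0)

lemma gp_m2_2 : GoodP (yv (-2) 2) := by
  have hgl := g_gt; have hgu := g_lt
  have hv : yv (-2) 2 = (-2:ℝ) + 2*gold := by unfold yv; push_cast; ring
  have e1 : Rmap (yv (-2) 2) = yv 0 0 := by
    rw [hv, Rbr4 (by linarith) (by linarith)]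
    unfold yv; push_cast; ring
  have e2 : Smap (yv (-2) 2) = yv 4 (-2) := by
    rw [hv, Sne (by intro h; linarith)]; unfold yv; push_cast; ring
  have hv2 : yv 4 (-2) = (4:ℝ) - 2*gold := by unfold yv; push_cast; ring
  have e3 : Rmap (yv 4 (-2)) = yv 0 0 := by
    rw [hv2, Rbr3 (by linarith) (by linarith)]
    unfold yv; push_cast; linear_combination ((-2:ℝ)*gold^2 + (2)*gold + (0)) * gsq
  exact good_step (by rw [e1]; exact gp_0_0) (by rw [e2, e3]; exact gp_0_0)

lemma gp_4_m2 : GoodP (yv 4 (-2)) := by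
  have hgl := g_gt; have hgu := g_lt
  have hv : yv 4 (-2) = (4:ℝ) - 2*gold := by unfold yv; push_cast; ring
  have e1 : Rmap (yv 4 (-2)) = yv 0 0 := by
    rw [hv, Rbr3 (by linarith) (by linarith)]
    unfold yv; push_cast; linear_combination ((-2:ℝ)*gold^2 + (2)*gold + (0)) * gsq
  have e2 : Smap (yv 4 (-2)) = yv (-2) 2 := by
    rw [hv, Sne (by intro h; linarith)]; unfold yv; push_cast; ring
  have hv2 : yv (-2) 2 = (-2:ℝ) + 2*gold := by unfold yv; push_cast; ring
  have e3 : Rmap (yv (-2) 2) = yv 0 0 := by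
    rw [hv2, Rbr4 (by linarith) (by linarith)]
    unfold yv; push_cast; ring
  exact good_step (by rw [e1]; exact gp_0_0) (by rw [e2, e3]; exact gp_0_0)

lemma gp_5_m2 : GoodP (yv 5 (-2)) := by
  have hgl := g_gt; have hgu := g_lt
  have hv : yv 5 (-2) = (5:ℝ) - 2*gold := by unfold yv; push_cast; ring
  have e1 : Rmap (yv 5 (-2)) = yv 1 0 := by
    rw [hv, Rbr5 (by linarith)]
    unfold yv; push_cast; linear_combination ((-2:ℝ)*gold^2 + (3)*gold + (1)) * gsq
  have e2 : Smap (yv 5 (-2)) = yv (-3) 2 := by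
    rw [hv, Sne (by intro h; linarith)]; unfold yv; push_cast; ring
  have hv2 : yv (-3) 2 = (-3:ℝ) + 2*gold := by unfold yv; push_cast; ring
  have e3 : Rmap (yv (-3) 2) = yv 1 0 := by
    rw [hv2, Rbr1 (by linarith)]
    unfold yv; push_cast; linear_combination ((2:ℝ)*gold^2 + (-1)*gold + (1)) * gsq
  exact good_step (by rw [e1]; exact gp_1_0) (by rw [e2, e3]; exact gp_1_0)

lemma gp_6_m3 : GoodP (yv 6 (-3)) := by
  have hgl := g_gt; have hgu := g_lt
  have hv : yv 6 (-3) = (6:ℝ) - 3*gold := by unfold yv; push_cast; ring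
  have e1 : Rmap (yv 6 (-3)) = yv 0 1 := by
    rw [hv, Rbr3 (by linarith) (by linarith)]
    unfold yv; push_cast; linear_combination ((-3:ℝ)*gold^2 + (3)*gold + (0)) * gsq
  have e2 : Smap (yv 6 (-3)) = yv (-4) 3 := by
    rw [hv, Sne (by intro h; linarith)]; unfold yv; push_cast; ring
  have hv2 : yv (-4) 3 = (-4:ℝ) + 3*gold := by unfold yv; push_cast; ring
  have e3 : Rmap (yv (-4) 3) = yv 2 (-1) := by
    rw [hv2, Rbr3 (by linarith) (by linarith)]
    unfold yv; push_cast; linear_combination ((3:ℝ)*gold^2 + (-1)*gold + (2)) * gsq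
  exact good_step (by rw [e1]; exact gp_0_1) (by rw [e2, e3]; exact gp_2_m1)

lemma gp_9_m5 : GoodP (yv 9 (-5)) := by
  have hgl := g_gt; have hgu := g_lt
  have hv : yv 9 (-5) = (9:ℝ) - 5*gold := by unfold yv; push_cast; ring
  have e1 : Rmap (yv 9 (-5)) = yv (-1) 1 := by
    rw [hv, Rbr3 (by linarith) (by linarith)]
    unfold yv; push_cast; linear_combination ((-5:ℝ)*gold^2 + (4)*gold + (-1)) * gsq
  have e2 : Smap (yv 9 (-5)) = yv (-7) 5 := by
    rw [hv, Sne (by intro h; linarith)]; unfold yv; push_cast; ring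
  have hv2 : yv (-7) 5 = (-7:ℝ) + 5*gold := by unfold yv; push_cast; ring
  have e3 : Rmap (yv (-7) 5) = yv 3 (-1) := by
    rw [hv2, Rbr3 (by linarith) (by linarith)]
    unfold yv; push_cast; linear_combination ((5:ℝ)*gold^2 + (-2)*gold + (3)) * gsq
  exact good_step (by rw [e1]; exact gp_m1_1) (by rw [e2, e3]; exact gp_3_m1)

lemma gp_10_m5 : GoodP (yv 10 (-5)) := by
  have hgl := g_gt; have hgu := g_lt
  have hv : yv 10 (-5) = (10:ℝ) - 5*gold := by unfold yv; push_cast; ring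
  have e1 : Rmap (yv 10 (-5)) = yv 0 1 := by
    rw [hv, Rbr5 (by linarith)]
    unfold yv; push_cast; linear_combination ((-5:ℝ)*gold^2 + (5)*gold + (0)) * gsq
  have e2 : Smap (yv 10 (-5)) = yv (-8) 5 := by
    rw [hv, Sne (by intro h; linarith)]; unfold yv; push_cast; ring
  have hv2 : yv (-8) 5 = (-8:ℝ) + 5*gold := by unfold yv; push_cast; ring
  have e3 : Rmap (yv (-8) 5) = yv 2 (-1) := by
    rw [hv2, Rbr1 (by linarith)]
    unfold yv; push_cast; linear_combination ((5:ℝ)*gold^2 + (-3)*gold + (2)) * gsq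
  exact good_step (by rw [e1]; exact gp_0_1) (by rw [e2, e3]; exact gp_2_m1)

lemma gp_m11_8 : GoodP (yv (-11) 8) := by
  have hgl := g_gt; have hgu := g_lt
  have hv : yv (-11) 8 = (-11:ℝ) + 8*gold := by unfold yv; push_cast; ring
  have e1 : Rmap (yv (-11) 8) = yv 5 (-2) := by
    rw [hv, Rbr5 (by linarith)]
    unfold yv; push_cast; linear_combination ((8:ℝ)*gold^2 + (-3)*gold + (5)) * gsq
  have e2 : Smap (yv (-11) 8) = yv 13 (-8) := by
    rw [hv, Sne (by intro h; linarith)]; unfold yv; push_cast; ring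
  have hv2 : yv 13 (-8) = (13:ℝ) - 8*gold := by unfold yv; push_cast; ring
  have e3 : Rmap (yv 13 (-8)) = yv (-3) 2 := by
    rw [hv2, Rbr1 (by linarith)]
    unfold yv; push_cast; linear_combination ((-8:ℝ)*gold^2 + (5)*gold + (-3)) * gsq
  exact good_step (by rw [e1]; exact gp_5_m2) (by rw [e2, e3]; exact gp_m3_2)

lemma gp_m8_6 : GoodP (yv (-8) 6) := by
  have hgl := g_gt; have hgu := g_lt
  have hv : yv (-8) 6 = (-8:ℝ) + 6*gold := by unfold yv; push_cast; ring
  have e1 : Rmap (yv (-8) 6) = yv 4 (-2) := by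
    rw [hv, Rbr5 (by linarith)]
    unfold yv; push_cast; linear_combination ((6:ℝ)*gold^2 + (-2)*gold + (4)) * gsq
  have e2 : Smap (yv (-8) 6) = yv 10 (-6) := by
    rw [hv, Sne (by intro h; linarith)]; unfold yv; push_cast; ring
  have hv2 : yv 10 (-6) = (10:ℝ) - 6*gold := by unfold yv; push_cast; ring
  have e3 : Rmap (yv 10 (-6)) = yv (-2) 2 := by
    rw [hv2, Rbr1 (by linarith)]
    unfold yv; push_cast; linear_combination ((-6:ℝ)*gold^2 + (4)*gold + (-2)) * gsq
  exact good_step (by rw [e1]; exact gp_4_m2) (by rw [e2, e3]; exact gp_m2_2)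

lemma gp_m5_4 : GoodP (yv (-5) 4) := by
  have hgl := g_gt; have hgu := g_lt
  have hv : yv (-5) 4 = (-5:ℝ) + 4*gold := by unfold yv; push_cast; ring
  have e1 : Rmap (yv (-5) 4) = yv (-3) 2 := by
    rw [hv, Rbr4 (by linarith) (by linarith)]
    unfold yv; push_cast; ring
  have e2 : Smap (yv (-5) 4) = yv 7 (-4) := by
    rw [hv, Sne (by intro h; linarith)]; unfold yv; push_cast; ring
  have hv2 : yv 7 (-4) = (7:ℝ) - 4*gold := by unfold yv; push_cast; ring
  have e3 : Rmap (yv 7 (-4)) = yv 5 (-2) := by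
    rw [hv2, Rbr2 (by linarith) (by linarith)]
    unfold yv; push_cast; ring
  exact good_step (by rw [e1]; exact gp_m3_2) (by rw [e2, e3]; exact gp_5_m2)

lemma gp_7_m4 : GoodP (yv 7 (-4)) := by
  have hgl := g_gt; have hgu := g_lt
  have hv : yv 7 (-4) = (7:ℝ) - 4*gold := by unfold yv; push_cast; ring
  have e1 : Rmap (yv 7 (-4)) = yv 5 (-2) := by
    rw [hv, Rbr2 (by linarith) (by linarith)]
    unfold yv; push_cast; ring
  have e2 : Smap (yv 7 (-4)) = yv (-5) 4 := by
    rw [hv, Sne (by intro h; linarith)]; unfold yv; push_cast; ring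
  have hv2 : yv (-5) 4 = (-5:ℝ) + 4*gold := by unfold yv; push_cast; ring
  have e3 : Rmap (yv (-5) 4) = yv (-3) 2 := by
    rw [hv2, Rbr4 (by linarith) (by linarith)]
    unfold yv; push_cast; ring
  exact good_step (by rw [e1]; exact gp_5_m2) (by rw [e2, e3]; exact gp_m3_2)

lemma gp_10_m6 : GoodP (yv 10 (-6)) := by
  have hgl := g_gt; have hgu := g_lt
  have hv : yv 10 (-6) = (10:ℝ) - 6*gold := by unfold yv; push_cast; ring
  have e1 : Rmap (yv 10 (-6)) = yv (-2) 2 := by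
    rw [hv, Rbr1 (by linarith)]
    unfold yv; push_cast; linear_combination ((-6:ℝ)*gold^2 + (4)*gold + (-2)) * gsq
  have e2 : Smap (yv 10 (-6)) = yv (-8) 6 := by
    rw [hv, Sne (by intro h; linarith)]; unfold yv; push_cast; ring
  have hv2 : yv (-8) 6 = (-8:ℝ) + 6*gold := by unfold yv; push_cast; ring
  have e3 : Rmap (yv (-8) 6) = yv 4 (-2) := by
    rw [hv2, Rbr5 (by linarith)]
    unfold yv; push_cast; linear_combination ((6:ℝ)*gold^2 + (-2)*gold + (4)) * gsq
  exact good_step (by rw [e1]; exact gp_m2_2) (by rw [e2, e3]; exact gp_4_m2)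

lemma gp_13_m8 : GoodP (yv 13 (-8)) := by
  have hgl := g_gt; have hgu := g_lt
  have hv : yv 13 (-8) = (13:ℝ) - 8*gold := by unfold yv; push_cast; ring
  have e1 : Rmap (yv 13 (-8)) = yv (-3) 2 := by
    rw [hv, Rbr1 (by linarith)]
    unfold yv; push_cast; linear_combination ((-8:ℝ)*gold^2 + (5)*gold + (-3)) * gsq
  have e2 : Smap (yv 13 (-8)) = yv (-11) 8 := by
    rw [hv, Sne (by intro h; linarith)]; unfold yv; push_cast; ring
  have hv2 : yv (-11) 8 = (-11:ℝ) + 8*gold := by unfold yv; push_cast; ring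
  have e3 : Rmap (yv (-11) 8) = yv 5 (-2) := by
    rw [hv2, Rbr5 (by linarith)]
    unfold yv; push_cast; linear_combination ((8:ℝ)*gold^2 + (-3)*gold + (5)) * gsq
  exact good_step (by rw [e1]; exact gp_m3_2) (by rw [e2, e3]; exact gp_5_m2)

lemma gp_m9_6 : GoodP (yv (-9) 6) := by
  have hgl := g_gt; have hgu := g_lt
  have hv : yv (-9) 6 = (-9:ℝ) + 6*gold := by unfold yv; push_cast; ring
  have e1 : Rmap (yv (-9) 6) = yv (-11) 8 := by
    rw [hv, Rbr2 (by linarith) (by linarith)]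
    unfold yv; push_cast; ring
  have e2 : Smap (yv (-9) 6) = yv 11 (-6) := by
    rw [hv, Sne (by intro h; linarith)]; unfold yv; push_cast; ring
  have hv2 : yv 11 (-6) = (11:ℝ) - 6*gold := by unfold yv; push_cast; ring
  have e3 : Rmap (yv 11 (-6)) = yv 13 (-8) := by
    rw [hv2, Rbr4 (by linarith) (by linarith)]
    unfold yv; push_cast; ring
  exact good_step (by rw [e1]; exact gp_m11_8) (by rw [e2, e3]; exact gp_13_m8)

lemma gp_m6_4 : GoodP (yv (-6) 4) := by
  have hgl := g_gt; have hgu := g_lt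
  have hv : yv (-6) 4 = (-6:ℝ) + 4*gold := by unfold yv; push_cast; ring
  have e1 : Rmap (yv (-6) 4) = yv (-8) 6 := by
    rw [hv, Rbr2 (by linarith) (by linarith)]
    unfold yv; push_cast; ring
  have e2 : Smap (yv (-6) 4) = yv 8 (-4) := by
    rw [hv, Sne (by intro h; linarith)]; unfold yv; push_cast; ring
  have hv2 : yv 8 (-4) = (8:ℝ) - 4*gold := by unfold yv; push_cast; ring
  have e3 : Rmap (yv 8 (-4)) = yv 10 (-6) := by
    rw [hv2, Rbr4 (by linarith) (by linarith)]
    unfold yv; push_cast; ring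
  exact good_step (by rw [e1]; exact gp_m8_6) (by rw [e2, e3]; exact gp_10_m6)

lemma gp_8_m4 : GoodP (yv 8 (-4)) := by
  have hgl := g_gt; have hgu := g_lt
  have hv : yv 8 (-4) = (8:ℝ) - 4*gold := by unfold yv; push_cast; ring
  have e1 : Rmap (yv 8 (-4)) = yv 10 (-6) := by
    rw [hv, Rbr4 (by linarith) (by linarith)]
    unfold yv; push_cast; ring
  have e2 : Smap (yv 8 (-4)) = yv (-6) 4 := by
    rw [hv, Sne (by intro h; linarith)]; unfold yv; push_cast; ring
  have hv2 : yv (-6) 4 = (-6:ℝ) + 4*gold := by unfold yv; push_cast; ring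
  have e3 : Rmap (yv (-6) 4) = yv (-8) 6 := by
    rw [hv2, Rbr2 (by linarith) (by linarith)]
    unfold yv; push_cast; ring
  exact good_step (by rw [e1]; exact gp_10_m6) (by rw [e2, e3]; exact gp_m8_6)

lemma key_base : ∀ m n : ℤ, 0 ≤ yv m n → yv m n < 2 → |zv m n| ≤ 14 → GoodP (yv m n) := by
  intro m n h0 h2 hz
  have hgl := g_gt; have hgu := g_lt
  obtain ⟨hz1, hz2⟩ := abs_le.mp hz
  have hy0 : (0:ℝ) ≤ (m:ℝ) + (n:ℝ)*gold := h0
  have hy2 : (m:ℝ) + (n:ℝ)*gold < 2 := h2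
  have hw1 : -(14:ℝ) ≤ (m:ℝ) + (n:ℝ)*(1-gold) := hz1
  have hw2 : (m:ℝ) + (n:ℝ)*(1-gold) ≤ 14 := hz2
  have hid : (n:ℝ)*(2*gold-1) = ((m:ℝ)+(n:ℝ)*gold) - ((m:ℝ)+(n:ℝ)*(1-gold)) := by ring
  have hn1 : n < 8 := by
    have h8 : (n:ℝ) < 8 := by
      by_contra hc; push_neg at hc
      have hmul := mul_le_mul_of_nonneg_right hc (by linarith : (0:ℝ) ≤ 2*gold - 1)
      linarith
    exact_mod_cast h8
  have hn2 : -8 < n := by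
    have h8 : (-8:ℝ) < (n:ℝ) := by
      by_contra hc; push_neg at hc
      have hmul := mul_le_mul_of_nonneg_right (by linarith : (n:ℝ) ≤ -8) (by linarith : (0:ℝ) ≤ 2*gold - 1)
      linarith
    exact_mod_cast h8
  interval_cases n
  · -- n = -7
    push_cast at hy0 hy2 hw1 hw2
    have hm1 : m < 14 := by
      have hr : (m:ℝ) < 14 := by linarith
      exact_mod_cast hr
    have hm2 : 11 < m := by
      have hr : (11:ℝ) < m := by linarith
      exact_mod_cast hr
    interval_cases m
    · exfalso; push_cast at hw1 hw2; linarith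
    · exfalso; push_cast at hw1 hw2; linarith
  · -- n = -6
    push_cast at hy0 hy2 hw1 hw2
    have hm1 : m < 12 := by
      have hr : (m:ℝ) < 12 := by linarith
      exact_mod_cast hr
    have hm2 : 9 < m := by
      have hr : (9:ℝ) < m := by linarith
      exact_mod_cast hr
    interval_cases m
    · exact gp_10_m6
    · exfalso; push_cast at hw1 hw2; linarith
  · -- n = -5
    push_cast at hy0 hy2 hw1 hw2
    have hm1 : m < 11 := by
      have hr : (m:ℝ) < 11 := by linarith
      exact_mod_cast hr
    have hm2 : 8 < m := by
      have hr : (8:ℝ) < m := by linarith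
      exact_mod_cast hr
    interval_cases m
    · exact gp_9_m5
    · exact gp_10_m5
  · -- n = -4
    push_cast at hy0 hy2 hw1 hw2
    have hm1 : m < 9 := by
      have hr : (m:ℝ) < 9 := by linarith
      exact_mod_cast hr
    have hm2 : 6 < m := by
      have hr : (6:ℝ) < m := by linarith
      exact_mod_cast hr
    interval_cases m
    · exact gp_7_m4
    · exact gp_8_m4
  · -- n = -3
    push_cast at hy0 hy2 hw1 hw2
    have hm1 : m < 7 := by
      have hr : (m:ℝ) < 7 := by linarith
      exact_mod_cast hr
    have hm2 : 4 < m := by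
      have hr : (4:ℝ) < m := by linarith
      exact_mod_cast hr
    interval_cases m
    · exact gp_5_m3
    · exact gp_6_m3
  · -- n = -2
    push_cast at hy0 hy2 hw1 hw2
    have hm1 : m < 6 := by
      have hr : (m:ℝ) < 6 := by linarith
      exact_mod_cast hr
    have hm2 : 3 < m := by
      have hr : (3:ℝ) < m := by linarith
      exact_mod_cast hr
    interval_cases m
    · exact gp_4_m2
    · exact gp_5_m2
  · -- n = -1
    push_cast at hy0 hy2 hw1 hw2
    have hm1 : m < 4 := by
      have hr : (m:ℝ) < 4 := by linarith
      exact_mod_cast hr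
    have hm2 : 1 < m := by
      have hr : (1:ℝ) < m := by linarith
      exact_mod_cast hr
    interval_cases m
    · exact gp_2_m1
    · exact gp_3_m1
  · -- n = 0
    push_cast at hy0 hy2 hw1 hw2
    have hm1 : m < 2 := by
      have hr : (m:ℝ) < 2 := by linarith
      exact_mod_cast hr
    have hm2 : (-1) < m := by
      have hr : (-1:ℝ) < m := by linarith
      exact_mod_cast hr
    interval_cases m
    · exact gp_0_0
    · exact gp_1_0
  · -- n = 1
    push_cast at hy0 hy2 hw1 hw2
    have hm1 : m < 1 := by
      have hr : (m:ℝ) < 1 := by linarith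
      exact_mod_cast hr
    have hm2 : (-2) < m := by
      have hr : (-2:ℝ) < m := by linarith
      exact_mod_cast hr
    interval_cases m
    · exact gp_m1_1
    · exact gp_0_1
  · -- n = 2
    push_cast at hy0 hy2 hw1 hw2
    have hm1 : m < -1 := by
      have hr : (m:ℝ) < -1 := by linarith
      exact_mod_cast hr
    have hm2 : (-4) < m := by
      have hr : (-4:ℝ) < m := by linarith
      exact_mod_cast hr
    interval_cases m
    · exact gp_m3_2
    · exact gp_m2_2
  · -- n = 3
    push_cast at hy0 hy2 hw1 hw2
    have hm1 : m < -2 := by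
      have hr : (m:ℝ) < -2 := by linarith
      exact_mod_cast hr
    have hm2 : (-5) < m := by
      have hr : (-5:ℝ) < m := by linarith
      exact_mod_cast hr
    interval_cases m
    · exact gp_m4_3
    · exact gp_m3_3
  · -- n = 4
    push_cast at hy0 hy2 hw1 hw2
    have hm1 : m < -4 := by
      have hr : (m:ℝ) < -4 := by linarith
      exact_mod_cast hr
    have hm2 : (-7) < m := by
      have hr : (-7:ℝ) < m := by linarith
      exact_mod_cast hr
    interval_cases m
    · exact gp_m6_4
    · exact gp_m5_4
  · -- n = 5
    push_cast at hy0 hy2 hw1 hw2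
    have hm1 : m < -6 := by
      have hr : (m:ℝ) < -6 := by linarith
      exact_mod_cast hr
    have hm2 : (-9) < m := by
      have hr : (-9:ℝ) < m := by linarith
      exact_mod_cast hr
    interval_cases m
    · exact gp_m8_5
    · exact gp_m7_5
  · -- n = 6
    push_cast at hy0 hy2 hw1 hw2
    have hm1 : m < -7 := by
      have hr : (m:ℝ) < -7 := by linarith
      exact_mod_cast hr
    have hm2 : (-10) < m := by
      have hr : (-10:ℝ) < m := by linarith
      exact_mod_cast hr
    interval_cases m
    · exact gp_m9_6
    · exact gp_m8_6
  · -- n = 7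
    push_cast at hy0 hy2 hw1 hw2
    have hm1 : m < -9 := by
      have hr : (m:ℝ) < -9 := by linarith
      exact_mod_cast hr
    have hm2 : (-12) < m := by
      have hr : (-12:ℝ) < m := by linarith
      exact_mod_cast hr
    interval_cases m
    · exfalso; push_cast at hw1 hw2; linarith
    · exfalso; push_cast at hw1 hw2; linarith

lemma key : ∀ K : ℕ, ∀ m n : ℤ, 0 ≤ yv m n → yv m n < 2 →
    |zv m n| ≤ 14 + 2*(K:ℝ) → GoodP (yv m n) := by
  intro K
  induction K with
  | zero =>
    intro m n h0 h2 hz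
    exact key_base m n h0 h2 (by push_cast at hz; linarith)
  | succ K ih =>
    intro m n h0 h2 hz
    exact key_succ K ih m n h0 h2 (by push_cast at hz; linarith)

/-- Any sufficiently long composition of the maps `R` and `R ∘ S` sends a point of
`ℤ[φ] ∩ [0,2)` into the eight-element set of Descent Lemma I. -/
theorem descent_lemma_with_involution (y : ℝ) (hy : y ∈ Set.Ico (0 : ℝ) 2)
    (hZ : y ∈ Zgold) :
    ∃ N₀ : ℕ, ∀ N ≥ N₀, ∀ g : ℕ → ℝ → ℝ,
      (∀ k < N, g k = Rmap ∨ g k = Rmap ∘ Smap) →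
      chain g y N ∈ ({0, 1, 2 - gold, gold, gold - 1, 3 * gold - 3, 3 - gold, 5 - 3 * gold} : Set ℝ) := by
  obtain ⟨m, n, rfl⟩ := hZ
  obtain ⟨h0, h2⟩ := hy
  have hg : GoodP (yv m n) :=
    key (Nat.ceil |zv m n|) m n h0 h2 (by
      have ha := Nat.le_ceil |zv m n|
      have hb : (0:ℝ) ≤ (Nat.ceil |zv m n| : ℝ) := Nat.cast_nonneg _
      linarith)
  exact hg
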